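/- For each n, k ∈ ℕ with n > k, there is a DNNF circuit of size n^{O(k)} over the variables {x_{i,j} : i, j ∈ [n], i ≠ j} expressing the function lintop_{n,k}. -/

import Mathlib

/-- Labels of nodes in an NNF circuit: Boolean constants, literals (a variable
with a polarity), conjunction, and disjunction. -/
inductive CLabel (V : Type*) where
  | const (b : Bool)
  | lit (v : V) (b : Bool)
  | and
  | or
deriving DecidableEq

/-- A Boolean circuit in negation normal form, given as a DAG: nodes are
`Fin size`, each node has a label and a list of children, and every edge goes
to a node with a strictly smaller index (this guarantees acyclicity).  The
node `root` is the (distinguished) root of the circuit. -/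
structure Circuit (V : Type*) where
  size : ℕ
  label : Fin size → CLabel V
  children : Fin size → List (Fin size)
  hwf : ∀ i : Fin size, ∀ j ∈ children i, (j : ℕ) < (i : ℕ)
  root : Fin size

namespace Circuit

variable {V : Type*}

/-- The truth value computed at node `i` of the circuit under assignment `α`. -/
def eval (C : Circuit V) (α : V → Bool) (i : Fin C.size) : Bool :=
  match C.label i with
  | .const b => b
  | .lit v b => α v == b
  | .and => (C.children i).attach.all (fun j => C.eval α j.1)
  | .or => (C.children i).attach.any (fun j => C.eval α j.1)
termination_by (i : ℕ)
decreasing_by all_goals exact C.hwf i j.1 j.2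

variable [DecidableEq V]

/-- The set of variables occurring in the subcircuit rooted at node `i`. -/
def vars (C : Circuit V) (i : Fin C.size) : Finset V :=
  match C.label i with
  | .const _ => ∅
  | .lit v _ => {v}
  | .and => ((C.children i).attach.map (fun j => C.vars j.1)).foldr (· ∪ ·) ∅
  | .or => ((C.children i).attach.map (fun j => C.vars j.1)).foldr (· ∪ ·) ∅
termination_by (i : ℕ)
decreasing_by all_goals exact C.hwf i j.1 j.2

/-- A circuit is decomposable (a DNNF circuit) if for every ∧-node the
variable sets of (the subcircuits rooted at) its children are pairwise
disjoint. -/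
def Decomposable (C : Circuit V) : Prop :=
  ∀ i : Fin C.size, C.label i = .and →
    (C.children i).Pairwise (fun j k => Disjoint (C.vars j) (C.vars k))

end Circuit

/-- The variables `x_{i,j}` for `i, j ∈ [n]`, `i ≠ j`, of the function
`lintop_{n,k}`. -/
abbrev VarsT (n : ℕ) := {p : Fin n × Fin n // p.1 ≠ p.2}

/-- An assignment `α` is a model of `lintop_{n,k}` iff there are a set
`K ⊆ [n]` with `|K| = k` and a linear order `r` on `K` such that
`α x_{i,j} = true` exactly when (`i, j ∈ K` and `i ≺ j`) or (`i ∈ K` and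
`j ∉ K`). -/
def satLintop (n k : ℕ) (α : VarsT n → Bool) : Prop :=
  ∃ K : Finset (Fin n), K.card = k ∧
    ∃ r : Fin n → Fin n → Bool,
      (∀ a ∈ K, r a a = false) ∧
      (∀ a ∈ K, ∀ b ∈ K, ∀ c ∈ K, r a b = true → r b c = true → r a c = true) ∧
      (∀ a ∈ K, ∀ b ∈ K, a ≠ b → r a b = true ∨ r b a = true) ∧
      (∀ p : VarsT n, α p = true ↔
        ((p.1.1 ∈ K ∧ p.1.2 ∈ K ∧ r p.1.1 p.1.2 = true) ∨ (p.1.1 ∈ K ∧ p.1.2 ∉ K)))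
namespace LintopAux

variable {V : Type*} [DecidableEq V]

private lemma idx_lt {t c len s : ℕ} (ht : t < len) (hs : s ≤ c) :
    t * (c + 1) + s < len * (c + 1) := by
  have h1 : t * (c + 1) + s < (t + 1) * (c + 1) := by
    have : (t + 1) * (c + 1) = t * (c + 1) + (c + 1) := by ring
    omega
  exact h1.trans_le (Nat.mul_le_mul_right _ ht)

variable (c : ℕ) (vf : Fin c → V) (L : List (V → Bool))

/-- Number of nodes. -/
def sz : ℕ := L.length * (c + 1) + 1

def rootIdx : Fin (sz c L) := ⟨L.length * (c + 1), Nat.lt_succ_self _⟩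

def andIdx (t : Fin L.length) : Fin (sz c L) :=
  ⟨t.1 * (c + 1) + c, Nat.lt_succ_of_lt (idx_lt t.2 le_rfl)⟩

def litIdx (t : Fin L.length) (s : Fin c) : Fin (sz c L) :=
  ⟨t.1 * (c + 1) + s.1, Nat.lt_succ_of_lt (idx_lt t.2 s.2.le)⟩

lemma mod_idx {t s : ℕ} (hs : s ≤ c) : (t * (c + 1) + s) % (c + 1) = s := by
  rw [Nat.mul_comm, Nat.mul_add_mod]; exact Nat.mod_eq_of_lt (by omega)

lemma div_idx {t s : ℕ} (hs : s ≤ c) : (t * (c + 1) + s) / (c + 1) = t := by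
  rw [Nat.add_comm, Nat.add_mul_div_right _ _ (Nat.succ_pos c),
    Nat.div_eq_of_lt (by omega), Nat.zero_add]

def lab : Fin (sz c L) → CLabel V := fun x =>
  if hx : x.1 = L.length * (c + 1) then .or
  else if hs : x.1 % (c + 1) = c then .and
  else
    have h1 : x.1 % (c + 1) < c :=
      lt_of_le_of_ne (Nat.lt_succ_iff.mp (Nat.mod_lt _ (Nat.succ_pos c))) hs
    have h2 : x.1 / (c + 1) < L.length :=
      (Nat.div_lt_iff_lt_mul (Nat.succ_pos c)).mpr
        (lt_of_le_of_ne (Nat.lt_succ_iff.mp x.2) hx)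
    .lit (vf ⟨x.1 % (c + 1), h1⟩)
      (L.get ⟨x.1 / (c + 1), h2⟩ (vf ⟨x.1 % (c + 1), h1⟩))

def chl : Fin (sz c L) → List (Fin (sz c L)) := fun x =>
  if hx : x.1 = L.length * (c + 1) then
    (List.finRange L.length).map (andIdx c L)
  else if hs : x.1 % (c + 1) = c then
    have h2 : x.1 / (c + 1) < L.length :=
      (Nat.div_lt_iff_lt_mul (Nat.succ_pos c)).mpr
        (lt_of_le_of_ne (Nat.lt_succ_iff.mp x.2) hx)
    (List.finRange c).map (fun s =>
      ⟨(x.1 / (c + 1)) * (c + 1) + s.1, Nat.lt_succ_of_lt (idx_lt h2 s.2.le)⟩)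
  else []

lemma shape (x : Fin (sz c L)) :
    x = rootIdx c L ∨ (∃ t, x = andIdx c L t) ∨ ∃ t s, x = litIdx c L t s := by
  by_cases hx : x.1 = L.length * (c + 1)
  · exact Or.inl (Fin.ext hx)
  · have hlt : x.1 < L.length * (c + 1) := lt_of_le_of_ne (Nat.lt_succ_iff.mp x.2) hx
    have h2 : x.1 / (c + 1) < L.length := (Nat.div_lt_iff_lt_mul (Nat.succ_pos c)).mpr hlt
    have hdm := Nat.div_add_mod x.1 (c + 1)
    by_cases hs : x.1 % (c + 1) = c
    · refine Or.inr (Or.inl ⟨⟨x.1 / (c + 1), h2⟩, Fin.ext ?_⟩)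
      simp only [andIdx]
      rw [Nat.mul_comm] at hdm; omega
    · have h1 : x.1 % (c + 1) < c :=
        lt_of_le_of_ne (Nat.lt_succ_iff.mp (Nat.mod_lt _ (Nat.succ_pos c))) hs
      refine Or.inr (Or.inr ⟨⟨x.1 / (c + 1), h2⟩, ⟨x.1 % (c + 1), h1⟩, Fin.ext ?_⟩)
      simp only [litIdx]
      rw [Nat.mul_comm] at hdm; omega

lemma lab_root : lab c vf L (rootIdx c L) = .or := by
  simp only [lab]; exact dif_pos rfl

lemma lab_and (t : Fin L.length) : lab c vf L (andIdx c L t) = .and := by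
  have hne : (andIdx c L t).1 ≠ L.length * (c + 1) := Nat.ne_of_lt (idx_lt t.2 le_rfl)
  have hmod : (andIdx c L t).1 % (c + 1) = c := mod_idx c le_rfl
  simp only [lab, dif_neg hne, dif_pos hmod]

lemma lab_lit (t : Fin L.length) (s : Fin c) :
    lab c vf L (litIdx c L t s) = .lit (vf s) (L.get t (vf s)) := by
  have hne : (litIdx c L t s).1 ≠ L.length * (c + 1) := Nat.ne_of_lt (idx_lt t.2 s.2.le)
  have hmod : (litIdx c L t s).1 % (c + 1) = s.1 := mod_idx c s.2.le
  have hdiv : (litIdx c L t s).1 / (c + 1) = t.1 := div_idx c s.2.le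
  have hsne : (litIdx c L t s).1 % (c + 1) ≠ c := by omega
  simp only [lab, dif_neg hne, dif_neg hsne]
  have e1 : ∀ h, (⟨(litIdx c L t s).1 % (c + 1), h⟩ : Fin c) = s := fun h => Fin.ext hmod
  have e2 : ∀ h, (⟨(litIdx c L t s).1 / (c + 1), h⟩ : Fin L.length) = t := fun h => Fin.ext hdiv
  rw [e1, e2]

lemma chl_root : chl c L (rootIdx c L) = (List.finRange L.length).map (andIdx c L) := by
  simp only [chl]; exact dif_pos rfl

lemma chl_and (t : Fin L.length) :
    chl c L (andIdx c L t) = (List.finRange c).map (litIdx c L t) := by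
  have hne : (andIdx c L t).1 ≠ L.length * (c + 1) := Nat.ne_of_lt (idx_lt t.2 le_rfl)
  have hmod : (andIdx c L t).1 % (c + 1) = c := mod_idx c le_rfl
  have hdiv : (andIdx c L t).1 / (c + 1) = t.1 := div_idx c le_rfl
  simp only [chl, dif_neg hne, dif_pos hmod]
  refine List.map_congr_left (fun s _ => Fin.ext ?_)
  simp only [litIdx, hdiv]

lemma chl_lit (t : Fin L.length) (s : Fin c) : chl c L (litIdx c L t s) = [] := by
  have hne : (litIdx c L t s).1 ≠ L.length * (c + 1) := Nat.ne_of_lt (idx_lt t.2 s.2.le)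
  have hmod : (litIdx c L t s).1 % (c + 1) = s.1 := mod_idx c s.2.le
  have hsne : (litIdx c L t s).1 % (c + 1) ≠ c := by omega
  simp only [chl, dif_neg hne, dif_neg hsne]

/-- The DNF-of-models circuit. -/
def mC : Circuit V where
  size := sz c L
  label := lab c vf L
  children := chl c L
  hwf := by
    intro i j hj
    rcases shape c L i with h | ⟨t, h⟩ | ⟨t, s, h⟩ <;> subst h
    · rw [chl_root] at hj
      simp only [List.mem_map, List.mem_finRange] at hj
      obtain ⟨t, -, rfl⟩ := hj
      exact idx_lt t.2 le_rfl
    · rw [chl_and] at hj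
      simp only [List.mem_map, List.mem_finRange] at hj
      obtain ⟨s, -, rfl⟩ := hj
      simp only [litIdx, andIdx]
      have := s.2; omega
    · rw [chl_lit] at hj; exact absurd hj List.not_mem_nil
  root := rootIdx c L

lemma eval_lit (α : V → Bool) (t : Fin L.length) (s : Fin c) :
    (mC c vf L).eval α (litIdx c L t s) = (α (vf s) == L.get t (vf s)) := by
  rw [Circuit.eval.eq_def (mC c vf L) α (litIdx c L t s)]
  have hl : (mC c vf L).label = lab c vf L := rfl
  rw [hl, lab_lit]

lemma eval_and (α : V → Bool) (t : Fin L.length) :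
    (mC c vf L).eval α (andIdx c L t) = true ↔ ∀ s : Fin c, α (vf s) = L.get t (vf s) := by
  rw [Circuit.eval.eq_def (mC c vf L) α (andIdx c L t)]
  have hl : (mC c vf L).label = lab c vf L := rfl
  have hc : (mC c vf L).children = chl c L := rfl
  rw [hl, lab_and]
  simp only [hc, chl_and, List.all_eq_true, List.mem_attach, true_implies, Subtype.forall,
    List.mem_map, List.mem_finRange]
  constructor
  · intro h s
    have := h (litIdx c L t s) (List.mem_map.mpr ⟨s, List.mem_finRange _, rfl⟩)
    rwa [eval_lit, beq_iff_eq] at this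
  · rintro h j hj
    obtain ⟨s, -, rfl⟩ := List.mem_map.mp hj
    rw [eval_lit, beq_iff_eq]; exact h s

lemma eval_root (α : V → Bool) :
    (mC c vf L).eval α (mC c vf L).root = true ↔
      ∃ t : Fin L.length, ∀ s : Fin c, α (vf s) = L.get t (vf s) := by
  have hr : (mC c vf L).root = rootIdx c L := rfl
  rw [hr, Circuit.eval.eq_def (mC c vf L) α (rootIdx c L)]
  have hl : (mC c vf L).label = lab c vf L := rfl
  have hc : (mC c vf L).children = chl c L := rfl
  rw [hl, lab_root]
  simp only [hc, chl_root, List.any_eq_true, List.mem_attach, true_and, Subtype.exists,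
    List.mem_map, List.mem_finRange]
  constructor
  · rintro ⟨j, hj, hev⟩
    obtain ⟨t, -, rfl⟩ := List.mem_map.mp hj
    exact ⟨t, (eval_and c vf L α t).mp hev⟩
  · rintro ⟨t, h⟩
    exact ⟨andIdx c L t, List.mem_map.mpr ⟨t, List.mem_finRange _, rfl⟩, (eval_and c vf L α t).mpr h⟩

lemma vars_lit (t : Fin L.length) (s : Fin c) :
    (mC c vf L).vars (litIdx c L t s) = {vf s} := by
  rw [Circuit.vars.eq_def (mC c vf L) (litIdx c L t s)]
  have hl : (mC c vf L).label = lab c vf L := rfl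
  rw [hl, lab_lit]

lemma decomposable (hvf : Function.Injective vf) : (mC c vf L).Decomposable := by
  intro i hi
  have hl : (mC c vf L).label = lab c vf L := rfl
  have hc : (mC c vf L).children = chl c L := rfl
  rw [hl] at hi
  rcases shape c L i with h | ⟨t, h⟩ | ⟨t, s, h⟩ <;> subst h
  · rw [lab_root] at hi; exact absurd hi (by simp)
  · rw [hc, chl_and]; refine List.pairwise_map.mpr ?_
    refine List.Pairwise.imp ?_ (List.nodup_finRange c)
    intro s s' hne
    rw [vars_lit, vars_lit, Finset.disjoint_singleton]
    exact fun h => hne (hvf h)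
  · rw [lab_lit] at hi; exact absurd hi (by simp)

end LintopAux
namespace LintopAux

/-- The canonical model of `lintop` associated to an injection `f : Fin k ↪ Fin n`. -/
def alphaOf (n k : ℕ) (f : Fin k ↪ Fin n) : VarsT n → Bool := fun p =>
  decide ((∃ i j : Fin k, i < j ∧ f i = p.1.1 ∧ f j = p.1.2) ∨
    ((∃ i, f i = p.1.1) ∧ ¬ ∃ i, f i = p.1.2))

lemma bool_eq_decide {b : Bool} {P : Prop} [Decidable P] (h : b = true ↔ P) :
    b = decide P := by
  cases b <;> simp_all

lemma sat_of_alphaOf (n k : ℕ) (f : Fin k ↪ Fin n) : satLintop n k (alphaOf n k f) := by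
  refine ⟨Finset.univ.map f, by simp, fun a b => decide (∃ i j : Fin k, i < j ∧ f i = a ∧ f j = b),
    ?_, ?_, ?_, ?_⟩
  · intro a _
    simp only [decide_eq_false_iff_not, not_exists]
    rintro i j ⟨hij, hi, hj⟩
    exact absurd (f.injective (hi.trans hj.symm)) (Nat.ne_of_lt hij ∘ congrArg Fin.val)
  · intro a _ b _ d _ hab hbd
    simp only [decide_eq_true_eq] at hab hbd ⊢
    obtain ⟨i, j, hij, hi, hj⟩ := hab
    obtain ⟨i', j', hij', hi', hj'⟩ := hbd
    have : j = i' := f.injective (hj.trans hi'.symm)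
    exact ⟨i, j', lt_trans (this ▸ hij) hij', hi, hj'⟩
  · intro a ha b hb hab
    simp only [Finset.mem_map, Finset.mem_univ, true_and] at ha hb
    obtain ⟨i, rfl⟩ := ha
    obtain ⟨j, rfl⟩ := hb
    have hij : i ≠ j := fun h => hab (congrArg f h)
    rcases lt_or_gt_of_ne hij with h | h
    · exact Or.inl (by simp only [decide_eq_true_eq]; exact ⟨i, j, h, rfl, rfl⟩)
    · exact Or.inr (by simp only [decide_eq_true_eq]; exact ⟨j, i, h, rfl, rfl⟩)
  · intro p
    simp only [alphaOf, decide_eq_true_eq, Finset.mem_map, Finset.mem_univ, true_and]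
    constructor
    · rintro (⟨i, j, hij, hi, hj⟩ | ⟨⟨i, hi⟩, hni⟩)
      · exact Or.inl ⟨⟨i, hi⟩, ⟨j, hj⟩, by first | (simp only [decide_eq_true_eq]; exact ⟨i, j, hij, hi, hj⟩) | exact ⟨i, j, hij, hi, hj⟩⟩
      · exact Or.inr ⟨⟨i, hi⟩, fun ⟨j, hj⟩ => hni ⟨j, hj⟩⟩
    · rintro (⟨-, -, hr⟩ | ⟨⟨i, hi⟩, hn⟩)
      · first
          | (simp only [decide_eq_true_eq] at hr; exact Or.inl hr)
          | exact Or.inl hr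
      · exact Or.inr ⟨⟨i, hi⟩, fun ⟨j, hj⟩ => hn ⟨j, hj⟩⟩

lemma alphaOf_of_sat {n k : ℕ} {α : VarsT n → Bool} (h : satLintop n k α) :
    ∃ f : Fin k ↪ Fin n, α = alphaOf n k f := by
  obtain ⟨K, hK, r, h0, htr, htot, hα⟩ := h
  let S := {a : Fin n // a ∈ K}
  let R : S → S → Prop := fun a b => a.1 = b.1 ∨ r a.1 b.1 = true
  haveI : DecidableRel R := fun a b => by
    simp only [R]; infer_instance
  haveI : IsTrans S R := ⟨by
    rintro a b d (hab | hab) (hbd | hbd)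
    · exact Or.inl (hab.trans hbd)
    · exact Or.inr (hab ▸ hbd)
    · exact Or.inr (hbd ▸ hab)
    · exact Or.inr (htr _ a.2 _ b.2 _ d.2 hab hbd)⟩
  haveI : Std.Antisymm R := ⟨by
    rintro a b (hab | hab) (hba | hba)
    · exact Subtype.ext hab
    · exact Subtype.ext hab
    · exact Subtype.ext hba.symm
    · exact absurd (htr _ a.2 _ b.2 _ a.2 hab hba) (by simp [h0 _ a.2])⟩
  haveI : Std.Total R := ⟨by
    intro a b
    by_cases hab : a.1 = b.1
    · exact Or.inl (Or.inl hab)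
    · rcases htot _ a.2 _ b.2 hab with h | h
      · exact Or.inl (Or.inr h)
      · exact Or.inr (Or.inr h)⟩
  let l : List S := Finset.sort Finset.univ R
  have hnd : l.Nodup := Finset.sort_nodup Finset.univ R
  have hsort : l.Pairwise R := Finset.pairwise_sort Finset.univ R
  have hlen : l.length = k := by
    simp only [l, Finset.length_sort, Finset.card_univ]
    rw [Fintype.card_coe, hK]
  let f0 : Fin k → Fin n := fun i => (l.get (Fin.cast hlen.symm i)).1
  have hmemf : ∀ i, f0 i ∈ K := fun i => (l.get _).2
  have hgetinj := List.nodup_iff_injective_get.mp hnd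
  have hinj : Function.Injective f0 := by
    intro i i' h
    have h2 := hgetinj (Subtype.ext h)
    have h3 := congrArg Fin.val h2
    simp only [Fin.coe_cast] at h3
    exact Fin.ext h3
  have hpair : ∀ (u v : Fin l.length), u < v → R (l.get u) (l.get v) :=
    List.pairwise_iff_get.mp hsort
  have hfr : ∀ i j : Fin k, i < j → r (f0 i) (f0 j) = true := by
    intro i j hij
    rcases hpair (Fin.cast hlen.symm i) (Fin.cast hlen.symm j) hij with h | h
    · have := hgetinj (Subtype.ext h)
      have := congrArg Fin.val this
      exact absurd this (Nat.ne_of_lt hij)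
    · exact h
  have hcov : ∀ a ∈ K, ∃ i : Fin k, f0 i = a := by
    intro a ha
    have hmem : (⟨a, ha⟩ : S) ∈ l := (Finset.mem_sort R).mpr (Finset.mem_univ _)
    obtain ⟨m, hm⟩ := List.mem_iff_get.mp hmem
    refine ⟨Fin.cast hlen m, ?_⟩
    simp only [f0]
    rw [show Fin.cast hlen.symm (Fin.cast hlen m) = m from Fin.ext rfl, hm]
  have hrev : ∀ a b : Fin n, a ∈ K → b ∈ K → r a b = true →
      ∃ i j : Fin k, i < j ∧ f0 i = a ∧ f0 j = b := by
    intro a b ha hb hab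
    have hne : a ≠ b := by
      rintro rfl
      exact absurd hab (by simp [h0 _ ha])
    have hmema : (⟨a, ha⟩ : S) ∈ l := (Finset.mem_sort R).mpr (Finset.mem_univ _)
    have hmemb : (⟨b, hb⟩ : S) ∈ l := (Finset.mem_sort R).mpr (Finset.mem_univ _)
    obtain ⟨ma, hma⟩ := List.mem_iff_get.mp hmema
    obtain ⟨mb, hmb⟩ := List.mem_iff_get.mp hmemb
    have hmne : ma ≠ mb := by
      rintro rfl
      exact hne (congrArg Subtype.val (hma.symm.trans hmb))
    have hmlt : ma < mb := by
      rcases lt_or_gt_of_ne hmne with h | h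
      · exact h
      · exfalso
        rcases hpair mb ma h with hh | hh
        · rw [hma, hmb] at hh
          exact hne (hh.symm)
        · rw [hma, hmb] at hh
          exact absurd (htr _ ha _ hb _ ha hab hh) (by simp [h0 _ ha])
    refine ⟨Fin.cast hlen ma, Fin.cast hlen mb, hmlt, ?_, ?_⟩
    · simp only [f0]
      rw [show Fin.cast hlen.symm (Fin.cast hlen ma) = ma from Fin.ext rfl, hma]
    · simp only [f0]
      rw [show Fin.cast hlen.symm (Fin.cast hlen mb) = mb from Fin.ext rfl, hmb]
  refine ⟨⟨f0, hinj⟩, funext fun p => ?_⟩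
  apply bool_eq_decide
  rw [hα p]
  simp only [Function.Embedding.coeFn_mk]
  constructor
  · rintro (⟨h1, h2, hr⟩ | ⟨h1, h2⟩)
    · obtain ⟨i, j, hij, hi, hj⟩ := hrev _ _ h1 h2 hr
      exact Or.inl ⟨i, j, hij, hi, hj⟩
    · obtain ⟨i, hi⟩ := hcov _ h1
      exact Or.inr ⟨⟨i, hi⟩, fun ⟨j, hj⟩ => h2 (hj ▸ hmemf j)⟩
  · rintro (⟨i, j, hij, hi, hj⟩ | ⟨⟨i, hi⟩, hn⟩)
    · exact Or.inl ⟨hi ▸ hmemf i, hj ▸ hmemf j, by rw [← hi, ← hj]; exact hfr i j hij⟩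
    · refine Or.inr ⟨hi ▸ hmemf i, fun hb => ?_⟩
      obtain ⟨j, hj⟩ := hcov _ hb
      exact hn ⟨j, hj⟩

end LintopAux


/-- there is a constant `c` such that for all `n > k` there is a
DNNF circuit with at most `c · n^{c·(k+1)}` nodes (i.e. of size `n^{O(k)}`)
over the variables `x_{i,j}` (`i ≠ j`) computing `lintop_{n,k}`. -/
theorem dnnf_for_lintop_polynomial_size :
    ∃ c : ℕ, 0 < c ∧ ∀ n k : ℕ, k < n → ∃ C : Circuit (VarsT n),
      C.Decomposable ∧
      (∀ α : VarsT n → Bool, C.eval α C.root = true ↔ satLintop n k α) ∧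
      C.size ≤ c * n ^ (c * (k + 1)) := by
  refine ⟨3, by norm_num, fun n k hk => ?_⟩
  classical
  set cV := Fintype.card (VarsT n) with hcV
  set vf : Fin cV → VarsT n := fun s => (Fintype.equivFin (VarsT n)).symm s with hvf
  set L : List (VarsT n → Bool) :=
    (Finset.univ : Finset (Fin k ↪ Fin n)).toList.map (LintopAux.alphaOf n k) with hL
  refine ⟨LintopAux.mC cV vf L, LintopAux.decomposable cV vf L (fun a b h => (Fintype.equivFin (VarsT n)).symm.injective h), ?_, ?_⟩
  · intro α
    rw [LintopAux.eval_root]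
    have hsurj : ∀ β : VarsT n → Bool,
        (∀ s : Fin cV, α (vf s) = β (vf s)) ↔ α = β := by
      intro β
      constructor
      · intro h
        funext v
        have := h ((Fintype.equivFin (VarsT n)) v)
        simpa [hvf, Equiv.symm_apply_apply] using this
      · intro h s; rw [h]
    constructor
    · rintro ⟨t, ht⟩
      have hmem : L.get t ∈ L := L.get_mem _
      generalize hβ : L.get t = β at hmem ht
      rw [hL] at hmem
      simp only [List.mem_map, Finset.mem_toList, Finset.mem_univ, true_and] at hmem
      obtain ⟨f, hf⟩ := hmem
      have : α = β := (hsurj _).mp ht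
      rw [this, ← hf]
      exact LintopAux.sat_of_alphaOf n k f
    · intro hsat
      obtain ⟨f, hf⟩ := LintopAux.alphaOf_of_sat hsat
      have hmem : LintopAux.alphaOf n k f ∈ L := by
        rw [hL]
        simp only [List.mem_map, Finset.mem_toList, Finset.mem_univ, true_and]
        exact ⟨f, rfl⟩
      obtain ⟨t, ht⟩ := List.mem_iff_get.mp hmem
      refine ⟨t, (hsurj _).mpr ?_⟩
      rw [hf, ht]
  · have hsz : (LintopAux.mC cV vf L).size = L.length * (cV + 1) + 1 := rfl
    have hlen : L.length ≤ n ^ k := by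
      rw [hL]
      simp only [List.length_map, Finset.length_toList, Finset.card_univ]
      rw [Fintype.card_embedding_eq]
      simp only [Fintype.card_fin]
      exact Nat.descFactorial_le_pow n k
    have hcb : cV ≤ n ^ 2 := by
      have h1 : cV ≤ Fintype.card (Fin n × Fin n) := Fintype.card_subtype_le _
      simpa [sq] using h1
    have hn : 1 ≤ n := by omega
    have h2 : n ^ k * n ^ 2 = n ^ (k + 2) := (pow_add n k 2).symm
    have h3 : n ^ k ≤ n ^ (k + 2) := Nat.pow_le_pow_right hn (by omega)
    have h4 : 1 ≤ n ^ (k + 2) := Nat.one_le_pow _ _ (by omega)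
    have h5 : n ^ (k + 2) ≤ n ^ (3 * (k + 1)) := Nat.pow_le_pow_right hn (by omega)
    calc (LintopAux.mC cV vf L).size = L.length * (cV + 1) + 1 := hsz
      _ ≤ n ^ k * (n ^ 2 + 1) + 1 := by
          have := Nat.mul_le_mul hlen (show cV + 1 ≤ n ^ 2 + 1 by omega)
          omega
      _ = n ^ k * n ^ 2 + n ^ k + 1 := by ring
      _ ≤ 3 * n ^ (k + 2) := by omega
      _ ≤ 3 * n ^ (3 * (k + 1)) := Nat.mul_le_mul_left 3 h5
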